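/- arXiv:1104.0311 — 2 statements merged into one kernel-verified Lean document; each statement's English description precedes it below -/
import Mathlib

section
/- Let Q₆ ∈ SO(2) be the rotation of ℝ² through angle π/3. For any matrix G ∈ ℝ^{2×2} and any unit vector r ∈ ℝ², the sum over j = 1,…,6 of |G (Q₆^j r)|² equals 3|G|², where |·| denotes the Euclidean (Frobenius) norm. -/
open Real Matrix Finset

noncomputable def Q6 : Matrix (Fin 2) (Fin 2) ℝ :=
  !![Real.cos (Real.pi / 3), -Real.sin (Real.pi / 3);
     Real.sin (Real.pi / 3),  Real.cos (Real.pi / 3)]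

/-- Squared Euclidean norm of a vector in ℝ². -/
def vnormSq (v : Fin 2 → ℝ) : ℝ := v 0 ^ 2 + v 1 ^ 2

/-- Squared Frobenius norm of a 2×2 matrix. -/
def frobSq (G : Matrix (Fin 2) (Fin 2) ℝ) : ℝ := ∑ i, ∑ j, G i j ^ 2

/-- For any `G ∈ ℝ^{2×2}` and unit vector `r`, `∑_{j=1}^6 |G Q₆ʲ r|² = 3 |G|²`. -/
theorem hex_quadratic_identity (G : Matrix (Fin 2) (Fin 2) ℝ) (r : Fin 2 → ℝ)
    (hr : vnormSq r = 1) :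
    ∑ j ∈ Finset.Icc 1 6, vnormSq (G.mulVec ((Q6 ^ j).mulVec r)) = 3 * frobSq G := by
  have ht : Real.sqrt 3 ^ 2 = 3 := Real.sq_sqrt (by norm_num)
  have hQ1 : Q6 = !![1/2, -(Real.sqrt 3/2); Real.sqrt 3/2, 1/2] := by
    rw [Q6, Real.cos_pi_div_three, Real.sin_pi_div_three]
  have hQ2 : Q6 ^ 2 = !![-(1/2), -(Real.sqrt 3/2); Real.sqrt 3/2, -(1/2)] := by
    rw [pow_two, hQ1]
    ext i j
    fin_cases i <;> fin_cases j <;>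
      simp [Matrix.mul_apply, Fin.sum_univ_two] <;> nlinarith [ht]
  have hQ3 : Q6 ^ 3 = -1 := by
    rw [pow_succ, hQ2, hQ1]
    ext i j
    fin_cases i <;> fin_cases j <;>
      simp [Matrix.mul_apply, Fin.sum_univ_two, Matrix.one_apply] <;> nlinarith [ht]
  have hQ4 : Q6 ^ 4 = -Q6 := by
    rw [show (4:ℕ) = 3 + 1 by norm_num, pow_add, hQ3, pow_one, neg_one_mul]
  have hQ5 : Q6 ^ 5 = -(Q6 ^ 2) := by
    rw [show (5:ℕ) = 3 + 2 by norm_num, pow_add, hQ3, neg_one_mul]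
  have hQ6 : Q6 ^ 6 = 1 := by
    rw [show (6:ℕ) = 3 + 3 by norm_num, pow_add, hQ3, neg_one_mul, neg_neg]
  have hIcc : Finset.Icc 1 6 = ({1, 2, 3, 4, 5, 6} : Finset ℕ) := by decide
  rw [hIcc]
  rw [vnormSq] at hr
  rw [Finset.sum_insert (by decide), Finset.sum_insert (by decide),
    Finset.sum_insert (by decide), Finset.sum_insert (by decide),
    Finset.sum_insert (by decide), Finset.sum_singleton]
  rw [pow_one, hQ6, hQ5, hQ4, hQ3, hQ2, hQ1]
  simp only [Matrix.neg_mulVec, Matrix.one_mulVec, Matrix.mulVec_neg]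
  simp only [vnormSq, frobSq, Matrix.mulVec, dotProduct, Fin.sum_univ_two,
    Pi.neg_apply, Matrix.cons_val', Matrix.cons_val_zero, Matrix.cons_val_one,
    Matrix.head_cons, Matrix.head_fin_const, Matrix.empty_val', Matrix.cons_val_fin_one,
    Matrix.of_apply, neg_sq]
  linear_combination (3 * (G 0 0 ^ 2 + G 0 1 ^ 2 + G 1 0 ^ 2 + G 1 1 ^ 2)) * hr +
    (G 1 1 ^ 2 * r 0 ^ 2 - 2 * G 1 0 * G 1 1 * r 0 * r 1 + G 1 0 ^ 2 * r 1 ^ 2 +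
      G 0 1 ^ 2 * r 0 ^ 2 - 2 * G 0 0 * G 0 1 * r 0 * r 1 + G 0 0 ^ 2 * r 1 ^ 2) * ht
end

section
/- Counting of face crossings by a segment (weak form): let 𝒯 be a finite set of closed triangles in the plane forming a triangulation (any two triangles intersect in a common face, edge, or vertex, or not at all), with all edge lengths ≥ 1 and all angles bounded below by θ₀ > 0. Then there exists a constant C depending only on θ₀ such that for any segment b of length L, the number of triangulation edges that intersect the relative interior of b in exactly one point is at most C(L + 1). -/
open EuclideanGeometry Set

set_option maxHeartbeats 1600000

local notation "E2" => EuclideanSpace ℝ (Fin 2)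

namespace FaceCross

open Metric MeasureTheory InnerProductGeometry Real

local notation "⟪" x ", " y "⟫" => @inner ℝ _ _ x y

noncomputable section

lemma sin_ge {θ A : ℝ} (hθ : 0 < θ) (h1 : θ ≤ A) (h2 : A ≤ Real.pi - θ) :
    Real.sin θ ≤ Real.sin A := by
  have hpi : 2 * θ ≤ Real.pi := by linarith
  rcases le_total A (Real.pi / 2) with h | h
  · exact Real.sin_le_sin_of_le_of_le_pi_div_two (by linarith [Real.pi_pos]) h h1
  · rw [← Real.sin_pi_sub A]
    exact Real.sin_le_sin_of_le_of_le_pi_div_two (by linarith [Real.pi_pos])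
      (by linarith) (by linarith)

lemma sqrtG {V : Type*} [NormedAddCommGroup V] [InnerProductSpace ℝ V] (u v : V) :
    Real.sqrt (‖u‖ ^ 2 * ‖v‖ ^ 2 - ⟪u, v⟫ ^ 2)
      = Real.sin (InnerProductGeometry.angle u v) * (‖u‖ * ‖v‖) := by
  rw [InnerProductGeometry.sin_angle_mul_norm_mul_norm]
  congr 1
  rw [real_inner_self_eq_norm_mul_norm, real_inner_self_eq_norm_mul_norm]
  ring

lemma Gsym {V : Type*} [NormedAddCommGroup V] [InnerProductSpace ℝ V] (u v : V) :
    ‖-u‖ ^ 2 * ‖v - u‖ ^ 2 - ⟪-u, v - u⟫ ^ 2 = ‖u‖ ^ 2 * ‖v‖ ^ 2 - ⟪u, v⟫ ^ 2 := by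
  have h1 : ⟪-u, v - u⟫ = ⟪u, u⟫ - ⟪u, v⟫ := by
    rw [inner_neg_left, inner_sub_right]; ring
  have h2 : ‖v - u‖ ^ 2 = ⟪v, v⟫ - 2 * ⟪u, v⟫ + ⟪u, u⟫ := by
    rw [← real_inner_self_eq_norm_sq (v - u), inner_sub_left, inner_sub_right,
      inner_sub_right, real_inner_comm v u]; ring
  have h3 : ‖-u‖ ^ 2 = ‖u‖ ^ 2 := by simp
  have h4 : ⟪u, u⟫ = ‖u‖ ^ 2 := real_inner_self_eq_norm_sq u
  have h5 : ⟪v, v⟫ = ‖v‖ ^ 2 := real_inner_self_eq_norm_sq v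
  rw [h1, h2, h3, h4, h5]; ring

lemma coeff_bound {V : Type*} [NormedAddCommGroup V] [InnerProductSpace ℝ V]
    {u v h : V} {s t : ℝ} (hh : h = s • u + t • v) :
    |s| * Real.sqrt (‖u‖ ^ 2 * ‖v‖ ^ 2 - ⟪u, v⟫ ^ 2) ≤ ‖h‖ * ‖v‖ := by
  have h4 : ⟪u, u⟫ = ‖u‖ ^ 2 := real_inner_self_eq_norm_sq u
  have h5 : ⟪v, v⟫ = ‖v‖ ^ 2 := real_inner_self_eq_norm_sq v
  have hc : ⟪v, u⟫ = ⟪u, v⟫ := real_inner_comm u v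
  set G := ‖u‖ ^ 2 * ‖v‖ ^ 2 - ⟪u, v⟫ ^ 2 with hG
  have hG0 : 0 ≤ G := by
    have := real_inner_mul_inner_self_le u v
    rw [real_inner_self_eq_norm_mul_norm, real_inner_self_eq_norm_mul_norm] at this
    rw [hG]; nlinarith
  set w₀ := ‖v‖ ^ 2 • u - ⟪u, v⟫ • v with hw₀
  have hiu : ⟪u, w₀⟫ = G := by
    rw [hw₀, inner_sub_right, real_inner_smul_right, real_inner_smul_right, h4, hG]; ring
  have hiv : ⟪v, w₀⟫ = 0 := by
    rw [hw₀, inner_sub_right, real_inner_smul_right, real_inner_smul_right, h5, hc]; ring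
  have hhw : ⟪h, w₀⟫ = s * G := by
    rw [hh, inner_add_left, real_inner_smul_left, real_inner_smul_left, hiu, hiv]; ring
  have hww : ⟪w₀, w₀⟫ = ‖v‖ ^ 2 * G := by
    simp only [hw₀, inner_sub_left, inner_sub_right, real_inner_smul_left,
      real_inner_smul_right]
    rw [h4, h5, hc, hG]; ring
  have hnww : ‖w₀‖ = ‖v‖ * Real.sqrt G := by
    have h6 : ‖w₀‖ ^ 2 = (‖v‖ * Real.sqrt G) ^ 2 := by
      rw [← real_inner_self_eq_norm_sq w₀, hww, mul_pow, Real.sq_sqrt hG0]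
    have h7 : 0 ≤ ‖v‖ * Real.sqrt G := by positivity
    nlinarith [norm_nonneg w₀]
  have hcs : |⟪h, w₀⟫| ≤ ‖h‖ * ‖w₀‖ := abs_real_inner_le_norm h w₀
  rw [hhw, abs_mul, abs_of_nonneg hG0, hnww] at hcs
  rcases eq_or_lt_of_le hG0 with h0 | h0
  · rw [← h0, Real.sqrt_zero, mul_zero]; positivity
  · have hsq : 0 < Real.sqrt G := Real.sqrt_pos.2 h0
    have hGd : Real.sqrt G * Real.sqrt G = G := Real.mul_self_sqrt hG0
    have : (|s| * Real.sqrt G) * Real.sqrt G ≤ (‖h‖ * ‖v‖) * Real.sqrt G := by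
      calc (|s| * Real.sqrt G) * Real.sqrt G = |s| * G := by rw [mul_assoc, hGd]
        _ ≤ ‖h‖ * (‖v‖ * Real.sqrt G) := hcs
        _ = (‖h‖ * ‖v‖) * Real.sqrt G := by ring
    exact le_of_mul_le_mul_right this hsq

lemma exists_decomp {u v : E2} (hG : 0 < ‖u‖ ^ 2 * ‖v‖ ^ 2 - ⟪u, v⟫ ^ 2) (h : E2) :
    ∃ s t : ℝ, h = s • u + t • v := by
  have h4 : ⟪u, u⟫ = ‖u‖ ^ 2 := real_inner_self_eq_norm_sq u
  have h5 : ⟪v, v⟫ = ‖v‖ ^ 2 := real_inner_self_eq_norm_sq v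
  have hli : LinearIndependent ℝ ![u, v] := by
    rw [LinearIndependent.pair_iff]
    intro s t hst
    have h1 : ⟪s • u + t • v, u⟫ = 0 := by rw [hst]; simp
    have h2 : ⟪s • u + t • v, v⟫ = 0 := by rw [hst]; simp
    rw [inner_add_left, real_inner_smul_left, real_inner_smul_left, h4,
      real_inner_comm u v] at h1
    rw [inner_add_left, real_inner_smul_left, real_inner_smul_left, h5] at h2
    constructor
    · have hs : s * (‖u‖ ^ 2 * ‖v‖ ^ 2 - ⟪u, v⟫ ^ 2) = 0 := by
        linear_combination ‖v‖ ^ 2 * h1 - ⟪u, v⟫ * h2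
      rcases mul_eq_zero.1 hs with h | h
      · exact h
      · exact absurd h hG.ne'
    · have ht : t * (‖u‖ ^ 2 * ‖v‖ ^ 2 - ⟪u, v⟫ ^ 2) = 0 := by
        linear_combination ‖u‖ ^ 2 * h2 - ⟪u, v⟫ * h1
      rcases mul_eq_zero.1 ht with h | h
      · exact h
      · exact absurd h hG.ne'
  have hr : Set.range ![u, v] = ({u, v} : Set E2) := by
    ext w
    simp [Fin.exists_fin_two]
    tauto
  have hsp : Submodule.span ℝ ({u, v} : Set E2) = ⊤ := by
    apply Submodule.eq_top_of_finrank_eq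
    rw [← hr, finrank_span_eq_card hli]
    simp [finrank_euclideanSpace_fin]
  have hm : h ∈ Submodule.span ℝ ({u, v} : Set E2) := hsp ▸ Submodule.mem_top
  obtain ⟨s, t, hst⟩ := Submodule.mem_span_pair.1 hm
  exact ⟨s, t, hst.symm⟩

lemma mem_tri_hull {a b c w : E2} {ca cb cc : ℝ} (h0 : 0 ≤ ca) (h1 : 0 ≤ cb) (h2 : 0 ≤ cc)
    (hs : ca + cb + cc = 1) (hw : w = ca • a + cb • b + cc • c) :
    w ∈ convexHull ℝ ({a, b, c} : Set E2) := by
  have hmem := Finset.centerMass_mem_convexHull (Finset.univ : Finset (Fin 3))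
    (w := ![ca, cb, cc]) (z := ![a, b, c]) (s := ({a, b, c} : Set E2)) (fun i _ => by fin_cases i <;> simpa)
    (by simp [Fin.sum_univ_three, hs]) (fun i _ => by fin_cases i <;> simp)
  have : Finset.univ.centerMass ![ca, cb, cc] ![a, b, c] = w := by
    rw [Finset.centerMass]
    simp [Fin.sum_univ_three, hs, hw]
  rwa [this] at hmem

lemma corner_ball {θ : ℝ} (hθ : 0 < θ) (hθ1 : θ ≤ 1)
    (a b c : E2) (hab : 1 ≤ dist a b) (hac : 1 ≤ dist a c) (hbc : 1 ≤ dist b c)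
    (hA : θ ≤ EuclideanGeometry.angle b a c) (hB : θ ≤ EuclideanGeometry.angle a b c)
    (hC : θ ≤ EuclideanGeometry.angle a c b)
    {p : E2} (hp : p ∈ segment ℝ a b) :
    ∃ z : E2, dist z p ≤ 1 ∧
      ball z (Real.sin θ ^ 2 / 8) ⊆ convexHull ℝ ({a, b, c} : Set E2) := by
  have hπ3 : (3:ℝ) < Real.pi := Real.pi_gt_three
  have hsθ : 0 < Real.sin θ := Real.sin_pos_of_pos_of_lt_pi hθ (by linarith)
  have hsθ1 : Real.sin θ ≤ 1 := Real.sin_le_one θ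
  set sθ := Real.sin θ with hsθdef
  set u := b - a with hu
  set v := c - a with hv
  have hu1 : 1 ≤ ‖u‖ := by rw [hu, ← dist_eq_norm, dist_comm]; exact hab
  have hv1 : 1 ≤ ‖v‖ := by rw [hv, ← dist_eq_norm, dist_comm]; exact hac
  have hu0 : (0:ℝ) < ‖u‖ := by linarith
  have hv0 : (0:ℝ) < ‖v‖ := by linarith
  have hvu : v - u = c - b := by rw [hu, hv]; abel
  have hd3 : 1 ≤ ‖v - u‖ := by rw [hvu, ← dist_eq_norm, dist_comm]; exact hbc
  have hba : b ≠ a := by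
    intro h; rw [h] at hab; simp at hab; linarith
  have hca : c ≠ a := by
    intro h; rw [h] at hac; simp at hac; linarith
  -- angle sum
  have hsum := EuclideanGeometry.angle_add_angle_add_angle_eq_pi (p₁ := a) (p₂ := b)
    c hba
  have hcomm1 : EuclideanGeometry.angle b c a = EuclideanGeometry.angle a c b :=
    EuclideanGeometry.angle_comm _ _ _
  have hcomm2 : EuclideanGeometry.angle c a b = EuclideanGeometry.angle b a c :=
    EuclideanGeometry.angle_comm _ _ _
  rw [hcomm1, hcomm2] at hsum
  have hAnn := EuclideanGeometry.angle_nonneg b a c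
  have hBnn := EuclideanGeometry.angle_nonneg a b c
  have hCnn := EuclideanGeometry.angle_nonneg a c b
  have hsA : sθ ≤ Real.sin (EuclideanGeometry.angle b a c) :=
    sin_ge hθ hA (by linarith)
  have hsB : sθ ≤ Real.sin (EuclideanGeometry.angle a b c) :=
    sin_ge hθ hB (by linarith)
  have hsC : sθ ≤ Real.sin (EuclideanGeometry.angle a c b) :=
    sin_ge hθ hC (by linarith)
  have hsA1 : Real.sin (EuclideanGeometry.angle b a c) ≤ 1 := Real.sin_le_one _
  have hsC1 : Real.sin (EuclideanGeometry.angle a c b) ≤ 1 := Real.sin_le_one _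
  -- Gram determinant
  set G := ‖u‖ ^ 2 * ‖v‖ ^ 2 - ⟪u, v⟫ ^ 2 with hG
  have hAeq : EuclideanGeometry.angle b a c = InnerProductGeometry.angle u v := rfl
  have hsqrtG : Real.sqrt G = Real.sin (EuclideanGeometry.angle b a c) * (‖u‖ * ‖v‖) := by
    rw [hG, sqrtG, hAeq]
  have hGpos : 0 < G := by
    apply Real.sqrt_pos.1
    rw [hsqrtG]
    exact mul_pos (lt_of_lt_of_le hsθ hsA) (mul_pos hu0 hv0)
  -- law of sines (vertex b and c expressions)
  have hBeq : EuclideanGeometry.angle a b c = InnerProductGeometry.angle (-u) (v - u) := by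
    have : a - b = -u := by rw [hu]; abel
    have h2 : c - b = v - u := hvu.symm
    show InnerProductGeometry.angle (a - b) (c - b) = _
    rw [this, h2]
  have hCeq : EuclideanGeometry.angle a c b = InnerProductGeometry.angle (-v) (u - v) := by
    have h1 : a - c = -v := by rw [hv]; abel
    have h2 : b - c = u - v := by rw [hu, hv]; abel
    show InnerProductGeometry.angle (a - c) (b - c) = _
    rw [h1, h2]
  have hsqrtGB : Real.sqrt G = Real.sin (EuclideanGeometry.angle a b c) * (‖u‖ * ‖v - u‖) := by
    rw [hG, ← Gsym u v, sqrtG, hBeq, norm_neg]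
  have hsqrtGC : Real.sqrt G = Real.sin (EuclideanGeometry.angle a c b) * (‖v‖ * ‖u - v‖) := by
    have hGsym2 : ‖-v‖ ^ 2 * ‖u - v‖ ^ 2 - ⟪-v, u - v⟫ ^ 2
        = ‖u‖ ^ 2 * ‖v‖ ^ 2 - ⟪u, v⟫ ^ 2 := by
      rw [Gsym v u, real_inner_comm u v]; ring
    rw [hG, ← hGsym2, sqrtG, hCeq, norm_neg]
  have huv_norm : ‖u - v‖ = ‖v - u‖ := norm_sub_rev u v
  -- ratio bound : ‖u‖ * sθ ≤ ‖v‖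
  have hratio : ‖u‖ * sθ ≤ ‖v‖ := by
    have hd3pos : (0:ℝ) < ‖v - u‖ := by linarith
    have h0 : Real.sin (EuclideanGeometry.angle a b c) * (‖u‖ * ‖v - u‖)
        = Real.sin (EuclideanGeometry.angle a c b) * (‖v‖ * ‖v - u‖) := by
      rw [← hsqrtGB, hsqrtGC, huv_norm]
    have h0' : (Real.sin (EuclideanGeometry.angle a b c) * ‖u‖) * ‖v - u‖
        = (Real.sin (EuclideanGeometry.angle a c b) * ‖v‖) * ‖v - u‖ := by
      linear_combination h0
    have hkey := mul_right_cancel₀ hd3pos.ne' h0'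
    have h1 : ‖u‖ * sθ ≤ ‖u‖ * Real.sin (EuclideanGeometry.angle a b c) :=
      mul_le_mul_of_nonneg_left hsB (norm_nonneg u)
    have h2 : Real.sin (EuclideanGeometry.angle a c b) * ‖v‖ ≤ 1 * ‖v‖ :=
      mul_le_mul_of_nonneg_right hsC1 (norm_nonneg v)
    calc ‖u‖ * sθ ≤ ‖u‖ * Real.sin (EuclideanGeometry.angle a b c) := h1
      _ = Real.sin (EuclideanGeometry.angle a b c) * ‖u‖ := by ring
      _ = Real.sin (EuclideanGeometry.angle a c b) * ‖v‖ := hkey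
      _ ≤ ‖v‖ := by linarith
  -- parameters
  obtain ⟨τ, hτmem, hτ⟩ := by
    rw [segment_eq_image'] at hp; exact hp
  obtain ⟨hτ0, hτ1⟩ := hτmem
  have hτ' : a + τ • u = p := hτ
  set cmin : ℝ := 1 / (2 * ‖u‖) with hcmin
  have hcmin_pos : 0 < cmin := by positivity
  have hcmin_half : cmin ≤ 1 / 2 := by
    rw [hcmin]
    calc 1 / (2 * ‖u‖) ≤ 1 / (2 * 1) := by
          apply one_div_le_one_div_of_le (by norm_num) (by linarith)
      _ = 1 / 2 := by norm_num
  set t' : ℝ := min (max τ cmin) (1 - cmin) with ht'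
  have ht'_lb : cmin ≤ t' := le_min (le_max_right _ _) (by linarith)
  have ht'_ub : t' ≤ 1 - cmin := min_le_right _ _
  have ht'_pos : 0 < t' := lt_of_lt_of_le hcmin_pos ht'_lb
  have ht'_le1 : t' ≤ 1 := by linarith
  have htd : |t' - τ| ≤ cmin := by
    rw [abs_sub_le_iff]
    constructor
    · have : t' ≤ max τ cmin := min_le_left _ _
      have : max τ cmin ≤ τ + cmin := max_le (by linarith) (by linarith)
      linarith [min_le_left (max τ cmin) (1 - cmin)]
    · have h1 : τ - cmin ≤ max τ cmin := le_trans (by linarith) (le_max_left _ _)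
      have h2 : τ - cmin ≤ 1 - cmin := by linarith
      have := le_min h1 h2
      linarith
  set p' : E2 := a + t' • u with hp'
  have hpp' : dist p' p ≤ 1 / 2 := by
    have hdiff : p' - p = (t' - τ) • u := by
      rw [hp', ← hτ', sub_smul]; module
    rw [dist_eq_norm, hdiff, norm_smul, Real.norm_eq_abs]
    calc |t' - τ| * ‖u‖ ≤ cmin * ‖u‖ := mul_le_mul_of_nonneg_right htd (norm_nonneg u)
      _ = 1 / 2 := by rw [hcmin]; field_simp
  set m : ℝ := ‖v - t' • u‖ with hm
  have hm_nn : 0 ≤ m := norm_nonneg _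
  set lam : ℝ := 1 / (2 * max 1 m) with hlam
  have hmax_pos : (0:ℝ) < max 1 m := lt_of_lt_of_le one_pos (le_max_left _ _)
  have hlam_pos : 0 < lam := by positivity
  have hlam_half : lam ≤ 1 / 2 := by
    rw [hlam]
    calc 1 / (2 * max 1 m) ≤ 1 / (2 * 1) := by
          apply one_div_le_one_div_of_le (by norm_num)
          have := le_max_left (1:ℝ) m
          linarith
      _ = 1 / 2 := by norm_num
  have hlamm : lam * m ≤ 1 / 2 := by
    have hmm : m ≤ max 1 m := le_max_right _ _
    have h1 : lam * m ≤ lam * max 1 m := mul_le_mul_of_nonneg_left hmm hlam_pos.le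
    have h2 : lam * max 1 m = 1 / 2 := by
      rw [hlam]; field_simp
    linarith
  have hm_ub : m ≤ ‖u‖ + ‖v‖ := by
    rw [hm]
    calc ‖v - t' • u‖ ≤ ‖v‖ + ‖t' • u‖ := norm_sub_le _ _
      _ = ‖v‖ + t' * ‖u‖ := by rw [norm_smul, Real.norm_eq_abs, abs_of_pos ht'_pos]
      _ ≤ ‖u‖ + ‖v‖ := by
          have h9 : t' * ‖u‖ ≤ 1 * ‖u‖ := mul_le_mul_of_nonneg_right ht'_le1 (norm_nonneg u)
          linarith
  have hlam_lb : 1 / (2 * (‖u‖ + ‖v‖)) ≤ lam := by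
    rw [hlam]
    apply div_le_div_of_nonneg_left (by norm_num) (by positivity)
    have : max 1 m ≤ ‖u‖ + ‖v‖ := max_le (by linarith) hm_ub
    linarith
  set z : E2 := p' + lam • (v - t' • u) with hz
  have hzp' : dist z p' ≤ 1 / 2 := by
    rw [dist_eq_norm, hz]
    simp only [add_sub_cancel_left]
    rw [norm_smul, Real.norm_eq_abs, abs_of_pos hlam_pos]
    exact hlamm
  refine ⟨z, ?_, ?_⟩
  · calc dist z p ≤ dist z p' + dist p' p := dist_triangle _ _ _
      _ ≤ 1 := by linarith
  -- ball inclusion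
  intro w hw
  rw [mem_ball, dist_eq_norm] at hw
  set h : E2 := w - z with hh
  obtain ⟨s, t, hst⟩ := exists_decomp hGpos h
  have hsb : |s| * Real.sqrt G ≤ ‖h‖ * ‖v‖ := by rw [hG]; exact coeff_bound hst
  have htb : |t| * Real.sqrt G ≤ ‖h‖ * ‖u‖ := by
    have hst' : h = t • v + s • u := by rw [hst]; abel
    have := coeff_bound hst'
    have hswap : ‖v‖ ^ 2 * ‖u‖ ^ 2 - ⟪v, u⟫ ^ 2 = G := by
      rw [hG, real_inner_comm u v]; ring
    rwa [hswap] at this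
  -- turn into clean bounds
  have hsinApos : 0 < Real.sin (EuclideanGeometry.angle b a c) := by linarith
  have hs_clean : |s| * (sθ * ‖u‖) ≤ ‖h‖ := by
    have h1 : |s| * (Real.sin (EuclideanGeometry.angle b a c) * (‖u‖ * ‖v‖)) ≤ ‖h‖ * ‖v‖ := by
      rw [← hsqrtG]; exact hsb
    have h2 : |s| * (sθ * ‖u‖) * ‖v‖ ≤ ‖h‖ * ‖v‖ := by
      have hstep : (sθ * ‖u‖) * ‖v‖ ≤ Real.sin (EuclideanGeometry.angle b a c) * (‖u‖ * ‖v‖) := by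
        have := mul_le_mul_of_nonneg_right hsA (mul_nonneg (norm_nonneg u) (norm_nonneg v))
        calc (sθ * ‖u‖) * ‖v‖ = sθ * (‖u‖ * ‖v‖) := by ring
          _ ≤ Real.sin (EuclideanGeometry.angle b a c) * (‖u‖ * ‖v‖) := this
      calc |s| * (sθ * ‖u‖) * ‖v‖ = |s| * ((sθ * ‖u‖) * ‖v‖) := by ring
        _ ≤ |s| * (Real.sin (EuclideanGeometry.angle b a c) * (‖u‖ * ‖v‖)) :=
            mul_le_mul_of_nonneg_left hstep (abs_nonneg s)
        _ ≤ ‖h‖ * ‖v‖ := h1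
    exact le_of_mul_le_mul_right h2 hv0
  have ht_clean : |t| * (sθ * ‖v‖) ≤ ‖h‖ := by
    have h1 : |t| * (Real.sin (EuclideanGeometry.angle b a c) * (‖u‖ * ‖v‖)) ≤ ‖h‖ * ‖u‖ := by
      rw [← hsqrtG]; exact htb
    have h2 : |t| * (sθ * ‖v‖) * ‖u‖ ≤ ‖h‖ * ‖u‖ := by
      have hstep : (sθ * ‖v‖) * ‖u‖ ≤ Real.sin (EuclideanGeometry.angle b a c) * (‖u‖ * ‖v‖) := by
        have := mul_le_mul_of_nonneg_right hsA (mul_nonneg (norm_nonneg u) (norm_nonneg v))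
        calc (sθ * ‖v‖) * ‖u‖ = sθ * (‖u‖ * ‖v‖) := by ring
          _ ≤ Real.sin (EuclideanGeometry.angle b a c) * (‖u‖ * ‖v‖) := this
      calc |t| * (sθ * ‖v‖) * ‖u‖ = |t| * ((sθ * ‖v‖) * ‖u‖) := by ring
        _ ≤ |t| * (Real.sin (EuclideanGeometry.angle b a c) * (‖u‖ * ‖v‖)) :=
            mul_le_mul_of_nonneg_left hstep (abs_nonneg t)
        _ ≤ ‖h‖ * ‖u‖ := h1
    exact le_of_mul_le_mul_right h2 hu0
  have hr : ‖h‖ < sθ ^ 2 / 8 := hw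
  -- coefficients
  set cb : ℝ := t' * (1 - lam) + s with hcb
  set cc : ℝ := lam + t with hcc
  set ca : ℝ := 1 - cb - cc with hca
  have habs_s : |s| * (sθ * ‖u‖) < sθ ^ 2 / 8 := lt_of_le_of_lt hs_clean hr
  have habs_t : |t| * (sθ * ‖v‖) < sθ ^ 2 / 8 := lt_of_le_of_lt ht_clean hr
  have hsu : |s| * ‖u‖ < sθ / 8 := by
    have h' : (|s| * ‖u‖) * sθ < (sθ / 8) * sθ := by
      calc (|s| * ‖u‖) * sθ = |s| * (sθ * ‖u‖) := by ring
        _ < sθ ^ 2 / 8 := habs_s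
        _ = (sθ / 8) * sθ := by ring
    exact lt_of_mul_lt_mul_right h' hsθ.le
  have htv : |t| * ‖v‖ < sθ / 8 := by
    have h' : (|t| * ‖v‖) * sθ < (sθ / 8) * sθ := by
      calc (|t| * ‖v‖) * sθ = |t| * (sθ * ‖v‖) := by ring
        _ < sθ ^ 2 / 8 := habs_t
        _ = (sθ / 8) * sθ := by ring
    exact lt_of_mul_lt_mul_right h' hsθ.le
  have htu : |t| * ‖u‖ < 1 / 8 := by
    have h1 : |t| * (‖u‖ * sθ) ≤ |t| * ‖v‖ := mul_le_mul_of_nonneg_left hratio (abs_nonneg t)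
    have h' : (|t| * ‖u‖) * sθ < (1 / 8) * sθ := by
      calc (|t| * ‖u‖) * sθ = |t| * (‖u‖ * sθ) := by ring
        _ ≤ |t| * ‖v‖ := h1
        _ < sθ / 8 := htv
        _ = (1 / 8) * sθ := by ring
    exact lt_of_mul_lt_mul_right h' hsθ.le
  have hsabs : s ≥ -|s| := neg_abs_le s
  have htabs : t ≥ -|t| := neg_abs_le t
  have hsabs' : s ≤ |s| := le_abs_self s
  have htabs' : t ≤ |t| := le_abs_self t
  have hcb0 : 0 ≤ cb := by
    have h1 : cmin * (1/2) ≤ t' * (1 - lam) :=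
      mul_le_mul ht'_lb (by linarith) (by norm_num) ht'_pos.le
    have h2 : |s| * ‖u‖ < 1 / 8 := lt_of_lt_of_le hsu (by linarith)
    rw [hcb]
    have h3 : cmin * (1/2) = 1 / (4 * ‖u‖) := by rw [hcmin]; field_simp; ring
    have h4 : |s| < 1 / (4 * ‖u‖) := by
      rw [lt_div_iff₀ (by positivity)]
      have hre : |s| * (4 * ‖u‖) = 4 * (|s| * ‖u‖) := by ring
      rw [hre]; linarith
    linarith [h3 ▸ h1]
  have hcc0 : 0 ≤ cc := by
    have h2 : |t| * (‖u‖ + ‖v‖) < 1 / 4 := by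
      have hre : |t| * (‖u‖ + ‖v‖) = |t| * ‖u‖ + |t| * ‖v‖ := by ring
      rw [hre]; linarith
    have h4 : |t| < 1 / (2 * (‖u‖ + ‖v‖)) := by
      rw [lt_div_iff₀ (by positivity)]
      have hre : |t| * (2 * (‖u‖ + ‖v‖)) = 2 * (|t| * (‖u‖ + ‖v‖)) := by ring
      rw [hre]; linarith
    rw [hcc]; linarith [hlam_lb]
  have hca0 : 0 ≤ ca := by
    have h1 : cmin * (1/2) ≤ (1 - t') * (1 - lam) :=
      mul_le_mul (by linarith) (by linarith) (by norm_num) (by linarith)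
    have h5 : (|s| + |t|) * ‖u‖ < 1 / 4 := by
      have hre : (|s| + |t|) * ‖u‖ = |s| * ‖u‖ + |t| * ‖u‖ := by ring
      rw [hre]; linarith
    have h6 : |s| + |t| < 1 / (4 * ‖u‖) := by
      rw [lt_div_iff₀ (by positivity)]
      have hre : (|s| + |t|) * (4 * ‖u‖) = 4 * ((|s| + |t|) * ‖u‖) := by ring
      rw [hre]; linarith
    have h3 : cmin * (1/2) = 1 / (4 * ‖u‖) := by rw [hcmin]; field_simp; ring
    have h7 : 1 - t' * (1 - lam) - lam = (1 - t') * (1 - lam) := by ring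
    rw [hca, hcb, hcc]
    have : (1 - t') * (1 - lam) - s - t ≥ 0 := by
      have := h3 ▸ h1
      linarith [abs_nonneg s, abs_nonneg t]
    linarith [this]
  have hsum1 : ca + cb + cc = 1 := by rw [hca]; ring
  have hwdec : w = ca • a + cb • b + cc • c := by
    have hwz : w = z + h := by rw [hh]; abel
    rw [hwz, hz, hp', hst, hu, hv, hca, hcb, hcc]
    module
  exact mem_tri_hull hca0 hcb0 hcc0 hsum1 hwdec

lemma range_eq_of_spanning {T : Fin 3 → E2} {S : Set E2} (hS : S ⊆ Set.range T)
    (htop : affineSpan ℝ S = ⊤) : S = Set.range T := by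
  by_contra hne
  have hex : ∃ i : Fin 3, T i ∉ S := by
    by_contra hall
    push_neg at hall
    apply hne
    apply Set.Subset.antisymm hS
    rintro y ⟨m, rfl⟩
    exact hall m
  obtain ⟨i, hi⟩ := hex
  obtain ⟨j, k, hji, hki, hjk, hall⟩ :
      ∃ j k : Fin 3, j ≠ i ∧ k ≠ i ∧ j ≠ k ∧ ∀ m : Fin 3, m = i ∨ m = j ∨ m = k := by
    have hd : ∀ i : Fin 3, ∃ j k : Fin 3, j ≠ i ∧ k ≠ i ∧ j ≠ k ∧
        ∀ m : Fin 3, m = i ∨ m = j ∨ m = k := by decide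
    exact hd i
  have hsub : S ⊆ ({T j, T k} : Set E2) := by
    intro y hy
    obtain ⟨m, hm⟩ := hS hy
    rcases hall m with rfl | rfl | rfl
    · exact absurd (hm ▸ hy) hi
    · exact Or.inl hm.symm
    · exact Or.inr hm.symm
  have hcol : Collinear ℝ S := (collinear_pair ℝ (T j) (T k)).subset hsub
  have hvs : vectorSpan ℝ S = (⊤ : Submodule ℝ E2) := by
    rw [← direction_affineSpan, htop, AffineSubspace.direction_top]
  have hfr := hcol.finrank_le_one
  rw [hvs, finrank_top, finrank_euclideanSpace_fin] at hfr
  omega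

lemma balls_disjoint {T₁ T₂ : Fin 3 → E2}
    (hface : ∃ S : Set E2, S ⊆ Set.range T₁ ∩ Set.range T₂ ∧
        convexHull ℝ (Set.range T₁) ∩ convexHull ℝ (Set.range T₂) = convexHull ℝ S)
    (hne : Set.range T₁ ≠ Set.range T₂) {z₁ z₂ : E2} {r : ℝ}
    (hb₁ : ball z₁ r ⊆ convexHull ℝ (Set.range T₁))
    (hb₂ : ball z₂ r ⊆ convexHull ℝ (Set.range T₂)) :
    Disjoint (ball z₁ r) (ball z₂ r) := by
  obtain ⟨S, hSsub, hinter⟩ := hface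
  rw [Set.disjoint_left]
  intro w hw1 hw2
  have hopen : IsOpen (ball z₁ r ∩ ball z₂ r) := isOpen_ball.inter isOpen_ball
  have hwsub : ball z₁ r ∩ ball z₂ r ⊆ convexHull ℝ S := by
    rw [← hinter]; exact Set.inter_subset_inter hb₁ hb₂
  have hint : (interior (convexHull ℝ S)).Nonempty :=
    ⟨w, interior_maximal hwsub hopen ⟨hw1, hw2⟩⟩
  have htop : affineSpan ℝ S = ⊤ := affineSpan_eq_top_of_nonempty_interior hint
  have h1 : S = Set.range T₁ :=
    range_eq_of_spanning (hSsub.trans Set.inter_subset_left) htop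
  have h2 : S = Set.range T₂ :=
    range_eq_of_spanning (hSsub.trans Set.inter_subset_right) htop
  exact hne (h1 ▸ h2)

lemma packing {ι : Type*} (𝒱 : Finset ι) (q : E2) {r : ℝ} (hr : 0 < r) (z : ι → E2)
    (hin : ∀ V ∈ 𝒱, ball (z V) r ⊆ ball q 3)
    (hdisj : (↑𝒱 : Set ι).PairwiseDisjoint fun V => ball (z V) r) :
    (𝒱.card : ℝ) * r ^ 2 ≤ 9 := by
  have hsum := measure_biUnion_finset (μ := volume) hdisj (fun V _ => measurableSet_ball)
  have hle : volume (⋃ V ∈ 𝒱, ball (z V) r) ≤ volume (ball q 3) :=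
    measure_mono (Set.iUnion₂_subset hin)
  rw [hsum] at hle
  have c0 : volume (ball (0 : E2) 1) ≠ 0 :=
    (measure_ball_pos volume 0 one_pos).ne'
  have ctop : volume (ball (0 : E2) 1) ≠ ⊤ := measure_ball_lt_top.ne
  have hball : ∀ x : E2, volume (ball x r)
      = ENNReal.ofReal (r ^ 2) * volume (ball (0 : E2) 1) := by
    intro x
    have := MeasureTheory.Measure.addHaar_ball (volume : Measure E2) x hr.le
    rwa [finrank_euclideanSpace_fin] at this
  have hball3 : volume (ball q 3)
      = ENNReal.ofReal ((3:ℝ) ^ 2) * volume (ball (0 : E2) 1) := by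
    have := MeasureTheory.Measure.addHaar_ball (volume : Measure E2) q
      (by norm_num : (0:ℝ) ≤ 3)
    rwa [finrank_euclideanSpace_fin] at this
  rw [hball3] at hle
  have hsum2 : ∑ V ∈ 𝒱, volume (ball (z V) r)
      = (𝒱.card : ENNReal) * (ENNReal.ofReal (r ^ 2) * volume (ball (0 : E2) 1)) := by
    rw [Finset.sum_congr rfl (fun V _ => hball (z V)), Finset.sum_const, nsmul_eq_mul]
  rw [hsum2, ← mul_assoc] at hle
  have hle2 : (𝒱.card : ENNReal) * ENNReal.ofReal (r ^ 2) ≤ ENNReal.ofReal ((3:ℝ) ^ 2) :=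
    (ENNReal.mul_le_mul_iff_left c0 ctop).1 hle
  rw [← ENNReal.ofReal_natCast 𝒱.card, ← ENNReal.ofReal_mul (by positivity)] at hle2
  have := (ENNReal.ofReal_le_ofReal_iff (by norm_num)).1 hle2
  linarith

end
end FaceCross

open FaceCross Metric MeasureTheory Real in
/-- Counting of face crossings by a segment (weak form): for any shape-regular
triangulation (pairwise intersections are common faces, edge lengths ≥ 1, angles ≥ θ₀),
the number of triangulation edges crossing the relative interior of a segment of
length `L` in exactly one point is at most `C(L + 1)`, with `C = C(θ₀)`. -/
theorem face_crossing_count (θ₀ : ℝ) (hθ₀ : 0 < θ₀) :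
    ∃ C : ℝ, ∀ (𝒯 : Finset (Fin 3 → EuclideanSpace ℝ (Fin 2))),
      -- any two triangles meet in a common face (possibly empty)
      (∀ T₁ ∈ 𝒯, ∀ T₂ ∈ 𝒯, ∃ S : Set (EuclideanSpace ℝ (Fin 2)),
          S ⊆ Set.range T₁ ∩ Set.range T₂ ∧
          convexHull ℝ (Set.range T₁) ∩ convexHull ℝ (Set.range T₂) = convexHull ℝ S) →
      -- all edge lengths at least 1
      (∀ T ∈ 𝒯, ∀ i j : Fin 3, i ≠ j → 1 ≤ dist (T i) (T j)) →
      -- all angles bounded below by θ₀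
      (∀ T ∈ 𝒯, ∀ i j k : Fin 3, i ≠ j → i ≠ k → j ≠ k →
          θ₀ ≤ EuclideanGeometry.angle (T j) (T i) (T k)) →
      ∀ x y : EuclideanSpace ℝ (Fin 2),
        ({e : EuclideanSpace ℝ (Fin 2) × EuclideanSpace ℝ (Fin 2) |
            ∃ T ∈ 𝒯, ∃ i j : Fin 3, i ≠ j ∧ e = (T i, T j) ∧
              ∃ p, segment ℝ e.1 e.2 ∩ openSegment ℝ x y = {p}}).ncard
          ≤ C * (dist x y + 1) := by
  classical
  set θ := min θ₀ 1 with hθdef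
  have hθ : 0 < θ := lt_min hθ₀ one_pos
  have hθ1 : θ ≤ 1 := min_le_right _ _
  set r : ℝ := Real.sin θ ^ 2 / 8 with hrdef
  have hπ3 : (3:ℝ) < Real.pi := Real.pi_gt_three
  have hsθ : 0 < Real.sin θ := Real.sin_pos_of_pos_of_lt_pi hθ (by linarith)
  have hsθ1 : Real.sin θ ≤ 1 := Real.sin_le_one θ
  have hr : 0 < r := by rw [hrdef]; positivity
  have hr1 : r ≤ 1 := by rw [hrdef]; nlinarith
  refine ⟨162 / r ^ 2, ?_⟩
  intro 𝒯 h1 h2 h3 x y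
  set L := dist x y with hL
  have hL0 : 0 ≤ L := dist_nonneg
  set A := {e : EuclideanSpace ℝ (Fin 2) × EuclideanSpace ℝ (Fin 2) |
      ∃ T ∈ 𝒯, ∃ i j : Fin 3, i ≠ j ∧ e = (T i, T j) ∧
        ∃ p, segment ℝ e.1 e.2 ∩ openSegment ℝ x y = {p}} with hA
  -- finiteness
  have hAfin : A.Finite := by
    have hUfin : (⋃ T ∈ (𝒯 : Set (Fin 3 → E2)), Set.range T).Finite :=
      Set.Finite.biUnion 𝒯.finite_toSet (fun T _ => Set.finite_range T)
    apply Set.Finite.subset (hUfin.prod hUfin)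
    rintro e ⟨T, hT, i, j, hij, he, -⟩
    rw [he]
    exact ⟨Set.mem_biUnion hT ⟨i, rfl⟩, Set.mem_biUnion hT ⟨j, rfl⟩⟩
  -- choice of data
  have hchoice : ∀ e ∈ A, ∃ (T : Fin 3 → E2) (p : E2) (i j : Fin 3),
      T ∈ 𝒯 ∧ i ≠ j ∧ e = (T i, T j) ∧ p ∈ segment ℝ (T i) (T j) ∧
        p ∈ openSegment ℝ x y := by
    rintro e ⟨T, hT, i, j, hij, he, p, hp⟩
    have hpm : p ∈ segment ℝ e.1 e.2 ∩ openSegment ℝ x y := by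
      rw [hp]; exact Set.mem_singleton p
    refine ⟨T, p, i, j, hT, hij, he, ?_, hpm.2⟩
    have h := hpm.1
    rw [he] at h
    simpa using h
  choose! W pt ii jj hW hij heq hseg hopn using hchoice
  -- centers
  set n : ℕ := max 1 ⌈L⌉₊ with hn
  have hn0 : 0 < n := lt_of_lt_of_le one_pos (le_max_left _ _)
  have hn0' : (0:ℝ) < (n:ℝ) := by exact_mod_cast hn0
  have hnL : L ≤ (n:ℝ) :=
    le_trans (Nat.le_ceil L) (by exact_mod_cast le_max_right 1 ⌈L⌉₊)
  have hnL1 : (n:ℝ) ≤ L + 1 := by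
    rw [hn]
    rcases max_cases 1 ⌈L⌉₊ with ⟨hmax, _⟩ | ⟨hmax, _⟩ <;> rw [hmax]
    · norm_num; linarith
    · exact le_of_lt (Nat.ceil_lt_add_one hL0)
  set q : ℕ → E2 := fun k => x + ((k:ℝ)/(n:ℝ)) • (y - x) with hq
  -- covering
  have hcover : ∀ e ∈ A, ∃ k : ℕ, k ≤ n ∧ dist (pt e) (q k) ≤ 1 := by
    intro e he
    have hseg' : pt e ∈ segment ℝ x y := openSegment_subset_segment ℝ x y (hopn e he)
    rw [segment_eq_image'] at hseg'
    obtain ⟨τ, ⟨hτ0, hτ1⟩, hτ⟩ := hseg'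
    have hτ' : x + τ • (y - x) = pt e := hτ
    refine ⟨⌊τ * n⌋₊, ?_, ?_⟩
    · have hle : τ * n ≤ (n:ℝ) := by
        have := mul_le_mul_of_nonneg_right hτ1 hn0'.le
        linarith
      calc ⌊τ * n⌋₊ ≤ ⌊(n:ℝ)⌋₊ := Nat.floor_le_floor hle
        _ = n := Nat.floor_natCast n
    · have hfl : ((⌊τ * n⌋₊:ℕ):ℝ) ≤ τ * n := Nat.floor_le (by positivity)
      have hfu : τ * n < (⌊τ * n⌋₊:ℝ) + 1 := Nat.lt_floor_add_one _
      have hdiff : pt e - q ⌊τ * n⌋₊ = (τ - ((⌊τ * n⌋₊:ℕ):ℝ)/(n:ℝ)) • (y - x) := by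
        rw [← hτ', hq]
        rw [sub_smul]
        module
      have hnorm : ‖y - x‖ = L := by rw [hL, dist_comm, dist_eq_norm]
      rw [dist_eq_norm, hdiff, norm_smul, Real.norm_eq_abs, hnorm]
      have h1 : ((⌊τ * n⌋₊:ℕ):ℝ)/(n:ℝ) ≤ τ := by
        rw [div_le_iff₀ hn0']; linarith
      have h2 : τ ≤ ((⌊τ * n⌋₊:ℕ):ℝ)/(n:ℝ) + 1/(n:ℝ) := by
        rw [← add_div, le_div_iff₀ hn0']; linarith
      have habs : |τ - ((⌊τ * n⌋₊:ℕ):ℝ)/(n:ℝ)| ≤ 1/(n:ℝ) := by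
        rw [abs_le]
        constructor
        · have : 0 < 1/(n:ℝ) := by positivity
          linarith
        · linarith
      calc |τ - ((⌊τ * n⌋₊:ℕ):ℝ)/(n:ℝ)| * L ≤ (1/(n:ℝ)) * L := by
            apply mul_le_mul_of_nonneg_right habs hL0
        _ ≤ 1 := by rw [div_mul_eq_mul_div, div_le_one hn0']; linarith
  choose! idx hidxn hidx using hcover
  -- Finset versions
  set F := hAfin.toFinset with hF
  have hmemF : ∀ e, e ∈ F ↔ e ∈ A := fun e => hAfin.mem_toFinset
  set φ : (EuclideanSpace ℝ (Fin 2) × EuclideanSpace ℝ (Fin 2)) → ℕ × Set E2 :=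
    fun e => (idx e, Set.range (W e)) with hφ
  -- fibers of φ have at most 9 elements
  have hfiber : ∀ b ∈ F.image φ, (F.filter (fun e => φ e = b)).card ≤ 9 := by
    intro b hb
    obtain ⟨e₀, he₀F, he₀⟩ := Finset.mem_image.1 hb
    set V : Finset (EuclideanSpace ℝ (Fin 2)) := Finset.image (W e₀) Finset.univ with hV
    have hVcard : V.card ≤ 3 := by
      calc V.card ≤ (Finset.univ : Finset (Fin 3)).card := Finset.card_image_le
        _ = 3 := by simp
    have hsub : F.filter (fun e => φ e = b) ⊆ V ×ˢ V := by
      intro e he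
      obtain ⟨heF, hφe⟩ := Finset.mem_filter.1 he
      have heA : e ∈ A := (hmemF e).1 heF
      have hre : Set.range (W e) = Set.range (W e₀) := by
        have hh : φ e = φ e₀ := hφe.trans he₀.symm
        exact congrArg Prod.snd hh
      have heq' := heq e heA
      rw [Finset.mem_product]
      constructor
      · have h1 : e.1 = W e (ii e) := congrArg Prod.fst heq'
        have h2 : W e (ii e) ∈ Set.range (W e₀) := hre ▸ ⟨ii e, rfl⟩
        obtain ⟨m, hm⟩ := h2
        rw [h1, ← hm]
        exact Finset.mem_image.2 ⟨m, Finset.mem_univ m, rfl⟩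
      · have h1 : e.2 = W e (jj e) := congrArg Prod.snd heq'
        have h2 : W e (jj e) ∈ Set.range (W e₀) := hre ▸ ⟨jj e, rfl⟩
        obtain ⟨m, hm⟩ := h2
        rw [h1, ← hm]
        exact Finset.mem_image.2 ⟨m, Finset.mem_univ m, rfl⟩
    calc (F.filter (fun e => φ e = b)).card ≤ (V ×ˢ V).card := Finset.card_le_card hsub
      _ = V.card * V.card := Finset.card_product _ _
      _ ≤ 9 := by nlinarith
  -- each slice is small, by packing
  have hmain2 : ∀ k ∈ Finset.range (n+1),
      ((((F.image φ).filter (fun b => b.1 = k)).card : ℝ)) ≤ 9 / r ^ 2 := by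
    intro k hk
    set slice := (F.image φ).filter (fun b => b.1 = k) with hslice
    set 𝒱 : Finset (Set E2) := slice.image Prod.snd with h𝒱
    have hcardeq : slice.card = 𝒱.card := by
      rw [h𝒱]
      refine (Finset.card_image_of_injOn ?_).symm
      intro b hb b' hb' hsnd
      have hb1 : b.1 = k := (Finset.mem_filter.1 hb).2
      have hb2 : b'.1 = k := (Finset.mem_filter.1 hb').2
      exact Prod.ext (hb1.trans hb2.symm) hsnd
    have hwit : ∀ V ∈ 𝒱, ∃ (zz : E2) (Tv : Fin 3 → E2), Tv ∈ 𝒯 ∧ Set.range Tv = V ∧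
        ball zz r ⊆ convexHull ℝ (Set.range Tv) ∧ ball zz r ⊆ ball (q k) 3 := by
      intro V hV
      obtain ⟨b, hb, hbV⟩ := Finset.mem_image.1 hV
      obtain ⟨hbi, hbk⟩ := Finset.mem_filter.1 hb
      obtain ⟨e, heF, heφ⟩ := Finset.mem_image.1 hbi
      have heA : e ∈ A := (hmemF e).1 heF
      have hidxk : idx e = k := by
        have hh : (φ e).1 = b.1 := congrArg Prod.fst heφ
        exact hh.trans hbk
      have hrangeV : Set.range (W e) = V :=
        (congrArg Prod.snd heφ).trans hbV
      obtain ⟨kk, hki, hkj⟩ : ∃ kk : Fin 3, kk ≠ ii e ∧ kk ≠ jj e := by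
        have hd : ∀ i j : Fin 3, i ≠ j → ∃ kk : Fin 3, kk ≠ i ∧ kk ≠ j := by decide
        exact hd _ _ (hij e heA)
      have hT𝒯 : W e ∈ 𝒯 := hW e heA
      have hijE : ii e ≠ jj e := hij e heA
      have hθθ₀ : θ ≤ θ₀ := min_le_left _ _
      obtain ⟨z, hz1, hz2⟩ := corner_ball hθ hθ1 (W e (ii e)) (W e (jj e)) (W e kk)
        (h2 _ hT𝒯 _ _ hijE) (h2 _ hT𝒯 _ _ (Ne.symm hki)) (h2 _ hT𝒯 _ _ (Ne.symm hkj))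
        (le_trans hθθ₀ (h3 _ hT𝒯 (ii e) (jj e) kk hijE (Ne.symm hki) (Ne.symm hkj)))
        (le_trans hθθ₀ (h3 _ hT𝒯 (jj e) (ii e) kk hijE.symm (Ne.symm hkj) (Ne.symm hki)))
        (le_trans hθθ₀ (h3 _ hT𝒯 kk (ii e) (jj e) hki hkj hijE))
        (hseg e heA)
      have hsets : ({W e (ii e), W e (jj e), W e kk} : Set E2) = Set.range (W e) := by
        apply Set.Subset.antisymm
        · intro w hw
          rcases hw with rfl | rfl | rfl
          · exact ⟨ii e, rfl⟩
          · exact ⟨jj e, rfl⟩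
          · exact ⟨kk, rfl⟩
        · rintro w ⟨m, rfl⟩
          have hall : ∀ m : Fin 3, m = ii e ∨ m = jj e ∨ m = kk := by
            have hd : ∀ i j kk' : Fin 3, i ≠ j → kk' ≠ i → kk' ≠ j →
                ∀ m : Fin 3, m = i ∨ m = j ∨ m = kk' := by decide
            exact hd _ _ _ hijE hki hkj
          rcases hall m with rfl | rfl | rfl
          · exact Set.mem_insert _ _
          · exact Set.mem_insert_of_mem _ (Set.mem_insert _ _)
          · exact Set.mem_insert_of_mem _ (Set.mem_insert_of_mem _ rfl)
      refine ⟨z, W e, hT𝒯, hrangeV, ?_, ?_⟩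
      · rw [hsets] at hz2
        exact hz2
      · intro w hw
        rw [mem_ball] at hw ⊢
        have hd1 := hidx e heA
        rw [hidxk] at hd1
        calc dist w (q k) ≤ dist w z + dist z (pt e) + dist (pt e) (q k) :=
              dist_triangle4 _ _ _ _
          _ < r + 1 + 1 := by
              apply add_lt_add_of_lt_of_le (add_lt_add_of_lt_of_le hw hz1) hd1
          _ ≤ 3 := by linarith
    choose! zz Tv hTv𝒯 hTvrange hTvball hTvball3 using hwit
    have hdisj : (↑𝒱 : Set (Set E2)).PairwiseDisjoint (fun V => ball (zz V) r) := by
      intro V hV W' hW' hVW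
      exact balls_disjoint (h1 (Tv V) (hTv𝒯 V hV) (Tv W') (hTv𝒯 W' hW'))
        (by rw [hTvrange V hV, hTvrange W' hW']; exact hVW)
        (hTvball V hV) (hTvball W' hW')
    have hpack := packing 𝒱 (q k) hr zz (fun V hV => hTvball3 V hV) hdisj
    rw [hcardeq, le_div_iff₀ (by positivity)]
    exact hpack
  -- assemble the count
  have hcard1 : F.card = ∑ b ∈ F.image φ, (F.filter (fun e => φ e = b)).card :=
    Finset.card_eq_sum_card_fiberwise (fun e he => Finset.mem_image_of_mem φ he)
  have hcard2 : (F.image φ).card = ∑ k ∈ Finset.range (n+1),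
      ((F.image φ).filter (fun b => b.1 = k)).card := by
    apply Finset.card_eq_sum_card_fiberwise
    intro b hb
    obtain ⟨e, heF, heφ⟩ := Finset.mem_image.1 hb
    have hle : idx e ≤ n := hidxn e ((hmemF e).1 heF)
    have hfst : b.1 = idx e := (congrArg Prod.fst heφ).symm
    rw [Finset.mem_coe, Finset.mem_range, hfst]
    omega
  have hb1 : (F.card : ℝ) ≤ 9 * ((F.image φ).card : ℝ) := by
    have := Finset.sum_le_card_nsmul (F.image φ)
      (fun b => (F.filter (fun e => φ e = b)).card) 9 hfiber
    rw [← hcard1] at this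
    have h9 : F.card ≤ (F.image φ).card * 9 := by simpa [smul_eq_mul] using this
    push_cast
    calc (F.card : ℝ) ≤ ((F.image φ).card * 9 : ℕ) := by exact_mod_cast h9
      _ = 9 * ((F.image φ).card : ℝ) := by push_cast; ring
  have hb2 : ((F.image φ).card : ℝ) ≤ ((n:ℝ)+1) * (9 / r^2) := by
    rw [hcard2]
    push_cast
    calc ∑ k ∈ Finset.range (n+1), ((((F.image φ).filter (fun b => b.1 = k)).card : ℝ))
        ≤ ∑ _k ∈ Finset.range (n+1), 9 / r^2 := Finset.sum_le_sum hmain2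
      _ = ((n:ℝ)+1) * (9/r^2) := by
          rw [Finset.sum_const, Finset.card_range, nsmul_eq_mul]
          push_cast; ring
  have hncard : (A.ncard : ℝ) = (F.card : ℝ) := by
    rw [hF, Set.ncard_eq_toFinset_card A hAfin]
  calc (A.ncard : ℝ) = (F.card : ℝ) := hncard
    _ ≤ 9 * ((F.image φ).card : ℝ) := hb1
    _ ≤ 9 * (((n:ℝ)+1) * (9 / r^2)) := by
        apply mul_le_mul_of_nonneg_left hb2 (by norm_num)
    _ = (81 * ((n:ℝ)+1)) / r ^ 2 := by ring
    _ ≤ (162 * (L+1)) / r ^ 2 := by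
        rw [div_le_div_iff_of_pos_right (by positivity)]
        linarith
    _ = 162 / r ^ 2 * (L + 1) := by ring
end
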